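/- Let θ ∈ (0, π), x = 2cosθ, and let (d_k) be complex numbers. Define q_0 = 0, q_1 = 1, q_{k+1} = (x + d_k)q_k − q_{k−1}, and U_0 = 0, U_1 = 1, U_{k+1} = xU_k − U_{k−1}. If there exist ε > 0 and m ∈ ℕ with Σ_{j=1}^{m−1} |d_j q_j| ≤ ε sinθ, then |q_n − U_n| ≤ ε for all 1 ≤ n ≤ m. -/

import Mathlib

theorem stmt_16 (θ : ℝ) (hθ : θ ∈ Set.Ioo 0 Real.pi)
    (x : ℝ) (hx : x = 2 * Real.cos θ)
    (d : ℕ → ℂ) (q : ℕ → ℂ) (U : ℕ → ℝ)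
    (hq0 : q 0 = 0) (hq1 : q 1 = 1)
    (hqrec : ∀ k, q (k + 2) = ((x : ℂ) + d (k + 1)) * q (k + 1) - q k)
    (hU0 : U 0 = 0) (hU1 : U 1 = 1)
    (hUrec : ∀ k, U (k + 2) = x * U (k + 1) - U k)
    (ε : ℝ) (hε : 0 < ε) (m : ℕ)
    (hsum : ∑ j ∈ Finset.Icc 1 (m - 1), ‖d j * q j‖ ≤ ε * Real.sin θ) :
    ∀ n, 1 ≤ n → n ≤ m → ‖q n - (U n : ℂ)‖ ≤ ε := by
  obtain ⟨hθ0, hθπ⟩ := hθ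
  have hs : 0 < Real.sin θ := Real.sin_pos_of_pos_of_lt_pi hθ0 hθπ
  -- U n * sin θ = sin (n θ)
  have hUsin : ∀ n : ℕ, U n * Real.sin θ = Real.sin (n * θ) := by
    have key : ∀ n : ℕ, U n * Real.sin θ = Real.sin (n * θ) ∧
        U (n + 1) * Real.sin θ = Real.sin ((n + 1 : ℕ) * θ) := by
      intro n
      induction n with
      | zero => constructor <;> simp [hU0, hU1]
      | succ k ih =>
        refine ⟨ih.2, ?_⟩
        have h1 : ((k + 2 : ℕ) : ℝ) * θ = ((k + 1 : ℕ) : ℝ) * θ + θ := by push_cast; ring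
        have h2 : ((k : ℕ) : ℝ) * θ = ((k + 1 : ℕ) : ℝ) * θ - θ := by push_cast; ring
        rw [show k + 1 + 1 = k + 2 from rfl, hUrec k, h1, Real.sin_add]
        have h3 := ih.1
        rw [h2, Real.sin_sub] at h3
        have h4 := ih.2
        rw [hx]
        linear_combination 2 * Real.cos θ * h4 - h3
    exact fun n => (key n).1
  have hUbd : ∀ k : ℕ, |U k| ≤ 1 / Real.sin θ := by
    intro k
    rw [le_div_iff₀ hs, ← abs_of_pos hs, ← abs_mul, hUsin k]
    exact Real.abs_sin_le_one _
  -- convolution formula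
  have hconv : ∀ n : ℕ, q n - (U n : ℂ) =
      ∑ j ∈ Finset.range n, d j * q j * ((U (n - j) : ℝ) : ℂ) := by
    have key : ∀ n : ℕ, (q n - (U n : ℂ) =
        ∑ j ∈ Finset.range n, d j * q j * ((U (n - j) : ℝ) : ℂ)) ∧
        (q (n + 1) - (U (n + 1) : ℂ) =
        ∑ j ∈ Finset.range (n + 1), d j * q j * ((U (n + 1 - j) : ℝ) : ℂ)) := by
      intro n
      induction n with
      | zero => constructor <;> simp [hq0, hq1, hU0, hU1]
      | succ k ih =>
        refine ⟨ih.2, ?_⟩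
        have hsplit : ∑ j ∈ Finset.range (k + 2), d j * q j * ((U (k + 2 - j) : ℝ) : ℂ)
            = (∑ j ∈ Finset.range (k + 1), d j * q j * ((U (k + 2 - j) : ℝ) : ℂ))
              + d (k + 1) * q (k + 1) * ((U 1 : ℝ) : ℂ) := by
          rw [Finset.sum_range_succ, show k + 2 - (k + 1) = 1 from by omega]
        have hterm : ∀ j ∈ Finset.range (k + 1),
            d j * q j * ((U (k + 2 - j) : ℝ) : ℂ)
            = (x : ℂ) * (d j * q j * ((U (k + 1 - j) : ℝ) : ℂ))
              - d j * q j * ((U (k - j) : ℝ) : ℂ) := by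
          intro j hj
          have hjk : j ≤ k := Nat.lt_succ_iff.mp (Finset.mem_range.mp hj)
          have e1 : k + 2 - j = (k - j) + 2 := by omega
          have e2 : k + 1 - j = (k - j) + 1 := by omega
          rw [e1, e2, hUrec (k - j)]
          push_cast
          ring
        have hsum1 : ∑ j ∈ Finset.range (k + 1), d j * q j * ((U (k + 1 - j) : ℝ) : ℂ)
            = q (k + 1) - (U (k + 1) : ℂ) := ih.2.symm
        have hsum0 : ∑ j ∈ Finset.range (k + 1), d j * q j * ((U (k - j) : ℝ) : ℂ)
            = q k - (U k : ℂ) := by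
          rw [Finset.sum_range_succ, Nat.sub_self, hU0]
          push_cast
          rw [mul_zero, add_zero]
          exact ih.1.symm
        rw [show k + 1 + 1 = k + 2 from rfl, hsplit, Finset.sum_congr rfl hterm,
          Finset.sum_sub_distrib, ← Finset.mul_sum, hsum1, hsum0, hqrec k, hUrec k, hU1]
        push_cast
        ring
    exact fun n => (key n).1
  intro n hn1 hnm
  rw [hconv n]
  calc ‖∑ j ∈ Finset.range n, d j * q j * ((U (n - j) : ℝ) : ℂ)‖
      ≤ ∑ j ∈ Finset.range n, ‖d j * q j * ((U (n - j) : ℝ) : ℂ)‖ := by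
        exact norm_sum_le _ _
    _ ≤ ∑ j ∈ Finset.range n, ‖d j * q j‖ * (1 / Real.sin θ) := by
        apply Finset.sum_le_sum
        intro j _
        rw [norm_mul]
        apply mul_le_mul_of_nonneg_left _ (norm_nonneg _)
        rw [Complex.norm_real, Real.norm_eq_abs]
        exact hUbd _
    _ = (∑ j ∈ Finset.range n, ‖d j * q j‖) * (1 / Real.sin θ) := by
        rw [Finset.sum_mul]
    _ ≤ (∑ j ∈ Finset.Icc 1 (m - 1), ‖d j * q j‖) * (1 / Real.sin θ) := by
        apply mul_le_mul_of_nonneg_right _ (by positivity)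
        have h0 : ∑ j ∈ Finset.range n, ‖d j * q j‖
            = ∑ j ∈ Finset.Icc 1 (n - 1), ‖d j * q j‖ := by
          have : Finset.range n = insert 0 (Finset.Icc 1 (n - 1)) := by
            ext j
            simp only [Finset.mem_range, Finset.mem_insert, Finset.mem_Icc]
            omega
          rw [this, Finset.sum_insert (by simp), hq0]
          simp
        rw [h0]
        apply Finset.sum_le_sum_of_subset_of_nonneg
        · intro j hj
          simp only [Finset.mem_Icc] at hj ⊢
          omega
        · intros; exact norm_nonneg _
    _ ≤ ε * Real.sin θ * (1 / Real.sin θ) :=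
        mul_le_mul_of_nonneg_right hsum (by positivity)
    _ = ε := by field_simp
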